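/- Lucas q-theorem: Let q ∈ ℂ^× be such that q² is a primitive ℓ-th root of unity, and write m = m₁ℓ + m₂, n = n₁ℓ + n₂ with m₁, n₁ ≥ 0 and 0 ≤ m₂, n₂ < ℓ. Then the q-binomial coefficient (defined as a limit of q-binomials at generic parameter) satisfies [m choose n]_q = q^{ℓ(n₁ℓ(n₁-m₁) - m₂n₁ - m₁n₂)} · C(m₁, n₁) · [m₂ choose n₂]_q, where C(m₁,n₁) is the ordinary binomial coefficient (zero if m₁ < n₁). In particular [m choose n]_q = 0 if and only if m₁ < n₁ or m₂ < n₂. -/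

import Mathlib

/-- The balanced Gaussian binomial coefficient, defined through the Pascal-type recursion
`[m+1 choose n+1]_q = q^{-(n+1)} [m choose n+1]_q + q^{m-n} [m choose n]_q`.
This coincides with the specialization at `t = q` (i.e. the limit `t → q`) of the balanced
Gaussian binomial `[m choose n]_t ∈ ℤ[t,t^{-1}]`. -/
noncomputable def gB (q : ℂ) : ℕ → ℕ → ℂ
  | _, 0 => 1
  | 0, _ + 1 => 0
  | m + 1, n + 1 => q ^ (-((n : ℤ) + 1)) * gB q m (n + 1) + q ^ ((m : ℤ) - n) * gB q m n

noncomputable def Gb (q : ℂ) : ℕ → ℕ → ℂ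
  | _, 0 => 1
  | 0, _ + 1 => 0
  | m + 1, n + 1 => Gb q m (n + 1) + (q ^ 2) ^ ((m : ℤ) - n) * Gb q m n

lemma Gb_zero (q : ℂ) (m : ℕ) : Gb q m 0 = 1 := by cases m <;> simp [Gb]

lemma Gb_eq_zero {q : ℂ} {m n : ℕ} (h : m < n) : Gb q m n = 0 := by
  induction m generalizing n with
  | zero => cases n with
    | zero => omega
    | succ n => simp [Gb]
  | succ m ih =>
    cases n with
    | zero => omega
    | succ n => simp [Gb, ih (show m < n + 1 by omega), ih (show m < n by omega)]

lemma Gb_self (q : ℂ) (m : ℕ) : Gb q m m = 1 := by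
  induction m with
  | zero => simp [Gb]
  | succ m ih => simp [Gb, Gb_eq_zero (Nat.lt_succ_self m), ih]

lemma gB_eq_Gb {q : ℂ} (hq0 : q ≠ 0) (m n : ℕ) :
    gB q m n = q ^ (-(n : ℤ) * ((m : ℤ) - n)) * Gb q m n := by
  induction m generalizing n with
  | zero => cases n with
    | zero => simp [gB, Gb]
    | succ n => simp [gB, Gb]
  | succ m ih =>
    cases n with
    | zero => simp [gB, Gb, Gb_zero]
    | succ n =>
      show gB q (m+1) (n+1) = _
      rw [gB, Gb, ih, ih]
      rw [mul_add]
      congr 1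
      · rw [← mul_assoc, ← zpow_add₀ hq0]
        congr 2
        push_cast
        ring
      · rw [← mul_assoc, ← mul_assoc, ← zpow_add₀ hq0,
          show (q^2) = q^((2:ℕ):ℤ) from (zpow_natCast q 2).symm,
          ← zpow_mul, ← zpow_add₀ hq0]
        congr 2
        push_cast
        ring

noncomputable def qnum (q : ℂ) (k : ℕ) : ℂ := ∑ i ∈ Finset.range k, (q ^ 2) ^ i

lemma qnum_succ (q : ℂ) (k : ℕ) : qnum q (k + 1) = (q ^ 2) ^ k + qnum q k := by
  simp [qnum, geom_sum_succ']

lemma qnum_mul_Gb {q : ℂ} (hq0 : q ≠ 0) (m n : ℕ) :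
    qnum q (n + 1) * Gb q (m + 1) (n + 1) = qnum q (m + 1) * Gb q m n := by
  have hQ0 : q ^ 2 ≠ 0 := pow_ne_zero 2 hq0
  induction m generalizing n with
  | zero =>
    cases n with
    | zero => simp [Gb, qnum]
    | succ n =>
      rw [Gb_eq_zero (show 1 < n + 2 by omega), Gb_eq_zero (show 0 < n + 1 by omega)]
      ring
  | succ m ih =>
    cases n with
    | zero =>
      have h0 := ih 0
      have hq1 : qnum q (0 + 1) = 1 := by simp [qnum]
      rw [Gb_zero, mul_one, hq1, one_mul] at h0
      show qnum q (0 + 1) * Gb q (m + 1 + 1) (0 + 1) = qnum q (m + 2) * Gb q (m + 1) 0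
      rw [Gb_zero, mul_one, hq1, one_mul, Gb, Gb_zero, mul_one, h0,
        show ((m + 1 : ℕ) : ℤ) - ((0 : ℕ) : ℤ) = ((m + 1 : ℕ) : ℤ) by push_cast; ring,
        zpow_natCast, qnum_succ q (m + 1)]
      ring
    | succ n =>
      show qnum q (n+2) * Gb q (m + 2) (n + 2) = _
      rw [show Gb q (m+2) (n+2) = Gb q (m+1) (n+2) + (q^2) ^ ((m : ℤ) - n) * Gb q (m+1) (n+1) from by
        rw [Gb]; push_cast; ring_nf]
      rw [mul_add, ih (n+1), qnum_succ q (n+1)]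
      have key : (q^2) ^ ((m : ℤ) - n) * ((q^2) ^ (n+1) * Gb q (m+1) (n+1))
          = (q^2) ^ ((m+1 : ℕ) : ℤ) * Gb q (m+1) (n+1) := by
        rw [← zpow_natCast (q^2) (n+1), ← mul_assoc, ← zpow_add₀ hQ0]
        congr 2
        push_cast
        ring
      calc qnum q (m+1) * Gb q m (n+1) + ((q^2)^(n+1) + qnum q (n+1)) * ((q^2) ^ ((m : ℤ) - n) * Gb q (m+1) (n+1))
          = qnum q (m+1) * Gb q m (n+1)
            + (q^2) ^ ((m : ℤ) - n) * (qnum q (n+1) * Gb q (m+1) (n+1))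
            + (q^2) ^ ((m : ℤ) - n) * ((q^2) ^ (n+1) * Gb q (m+1) (n+1)) := by ring
        _ = qnum q (m+1) * Gb q m (n+1)
            + (q^2) ^ ((m : ℤ) - n) * (qnum q (m+1) * Gb q m n)
            + (q^2) ^ ((m+1 : ℕ) : ℤ) * Gb q (m+1) (n+1) := by rw [ih n, key]
        _ = qnum q (m+1) * (Gb q m (n+1) + (q^2) ^ ((m : ℤ) - n) * Gb q m n)
            + (q^2) ^ ((m+1 : ℕ) : ℤ) * Gb q (m+1) (n+1) := by ring
        _ = qnum q (m+1) * Gb q (m+1) (n+1) + (q^2) ^ ((m+1 : ℕ) : ℤ) * Gb q (m+1) (n+1) := by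
            rw [← Gb]
        _ = qnum q (m+2) * Gb q (m+1) (n+1) := by
            rw [qnum_succ q (m+1), zpow_natCast]; ring

section Roots
variable {q : ℂ} {ℓ : ℕ} (hq0 : q ≠ 0) (hℓ : 2 ≤ ℓ) (hq : IsPrimitiveRoot (q ^ 2) ℓ)

include hq hℓ in
lemma qnum_ne_zero {k : ℕ} (hk0 : 0 < k) (hk : k < ℓ) : qnum q k ≠ 0 := by
  have hQ1 : q ^ 2 ≠ 1 := by
    intro h
    have := hq.pow_ne_one_of_pos_of_lt (l := 1) one_ne_zero (by omega)
    simp [h] at this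
  have hk1 : (q ^ 2) ^ k ≠ 1 := hq.pow_ne_one_of_pos_of_lt hk0.ne' hk
  intro h
  have := geom_sum_mul (q ^ 2) k
  rw [show (∑ i ∈ Finset.range k, (q ^ 2) ^ i) = qnum q k from rfl, h, zero_mul] at this
  exact hk1 (sub_eq_zero.mp this.symm)

include hq hℓ in
lemma qnum_ell_eq_zero : qnum q ℓ = 0 := by
  have hQ1 : q ^ 2 ≠ 1 := by
    intro h
    have := hq.pow_ne_one_of_pos_of_lt (l := 1) one_ne_zero (by omega)
    simp [h] at this
  have h1 : (q ^ 2) ^ ℓ = 1 := hq.pow_eq_one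
  have := geom_sum_mul (q ^ 2) ℓ
  rw [h1, sub_self] at this
  exact (mul_eq_zero.mp this).resolve_right (sub_ne_zero.mpr hQ1)

include hq hℓ in
lemma Gb_ne_zero {m n : ℕ} (hnm : n ≤ m) (hm : m < ℓ) (hq0 : q ≠ 0) : Gb q m n ≠ 0 := by
  induction m generalizing n with
  | zero =>
    interval_cases n
    simp [Gb]
  | succ m ih =>
    cases n with
    | zero => simp [Gb_zero]
    | succ n =>
      have h := qnum_mul_Gb hq0 m n
      have h1 : qnum q (m + 1) * Gb q m n ≠ 0 :=
        mul_ne_zero (qnum_ne_zero hℓ hq (by omega) hm) (ih (by omega) (by omega))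
      rw [← h] at h1
      exact fun h2 => h1 (by rw [h2, mul_zero])
end Roots

section Ell
variable {q : ℂ} {ℓ : ℕ} (hq0 : q ≠ 0) (hℓ : 2 ≤ ℓ) (hq : IsPrimitiveRoot (q ^ 2) ℓ)

include hq0 hℓ hq in
lemma Gb_row_ell (n : ℕ) : Gb q ℓ n = (if n = 0 then 1 else 0) + (if n = ℓ then 1 else 0) := by
  rcases Nat.lt_trichotomy n ℓ with h | h | h
  · rcases Nat.eq_zero_or_pos n with h0 | h0
    · subst h0
      simp [Gb_zero, show (0 : ℕ) ≠ ℓ by omega]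
    · have key := qnum_mul_Gb hq0 (ℓ - 1) (n - 1)
      rw [show ℓ - 1 + 1 = ℓ by omega, show n - 1 + 1 = n by omega,
        qnum_ell_eq_zero hℓ hq, zero_mul] at key
      have hnz := qnum_ne_zero hℓ hq h0 h
      have hG : Gb q ℓ n = 0 := (mul_eq_zero.mp key).resolve_left hnz
      rw [hG]
      simp [show n ≠ 0 by omega, show n ≠ ℓ by omega]
  · rw [h, Gb_self]
    simp [show ℓ ≠ 0 by omega]
  · rw [Gb_eq_zero h]
    simp [show n ≠ 0 by omega, show n ≠ ℓ by omega]

include hq0 hℓ hq in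
lemma Gb_add_ell (m n : ℕ) :
    Gb q (m + ℓ) n = Gb q m n + (if ℓ ≤ n then Gb q m (n - ℓ) else 0) := by
  have hQ0 : q ^ 2 ≠ 0 := pow_ne_zero 2 hq0
  induction m generalizing n with
  | zero =>
    rw [zero_add, Gb_row_ell hq0 hℓ hq]
    by_cases hn0 : n = 0
    · subst hn0
      simp [Gb_zero, show ¬ ℓ ≤ 0 by omega, show (0 : ℕ) ≠ ℓ by omega]
    · by_cases hnℓ : n = ℓ
      · subst hnℓ
        simp [hn0, Gb_eq_zero (show 0 < n by omega), Gb_zero]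
      · rw [Gb_eq_zero (show 0 < n by omega)]
        by_cases hle : ℓ ≤ n
        · rw [Gb_eq_zero (show 0 < n - ℓ by omega)]
          simp [hn0, hnℓ, hle]
        · simp [hn0, hnℓ, hle]
  | succ m ih =>
    cases n with
    | zero => simp [Gb_zero, show ¬ ℓ ≤ 0 by omega]
    | succ n =>
      have hpow : (q ^ 2) ^ (((m + ℓ : ℕ) : ℤ) - (n : ℕ)) = (q ^ 2) ^ ((m : ℤ) - n) := by
        rw [show ((m + ℓ : ℕ) : ℤ) - (n : ℕ) = ((m : ℤ) - n) + ℓ by push_cast; ring,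
          zpow_add₀ hQ0, zpow_natCast, hq.pow_eq_one, mul_one]
      rw [show m + 1 + ℓ = m + ℓ + 1 by omega, Gb, ih (n + 1), ih n, hpow, Gb]
      by_cases h1 : ℓ ≤ n
      · have h2 : ℓ ≤ n + 1 := by omega
        have h3 : n + 1 - ℓ = (n - ℓ) + 1 := by omega
        simp only [if_pos h1, if_pos h2, h3]
        rw [Gb]
        have hpow2 : (q ^ 2) ^ ((m : ℤ) - ((n - ℓ : ℕ) : ℤ)) = (q ^ 2) ^ ((m : ℤ) - n) := by
          rw [show (m : ℤ) - ((n - ℓ : ℕ) : ℤ) = ((m : ℤ) - n) + ℓ by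
            rw [Nat.cast_sub h1]; ring, zpow_add₀ hQ0, zpow_natCast, hq.pow_eq_one, mul_one]
        rw [hpow2]
        ring
      · by_cases h2 : ℓ ≤ n + 1
        · have h3 : n + 1 - ℓ = 0 := by omega
          simp only [if_neg h1, if_pos h2, h3, Gb_zero]
          ring
        · simp only [if_neg h1, if_neg h2]
          ring
end Ell

lemma Gb_lucas {q : ℂ} {ℓ : ℕ} (hq0 : q ≠ 0) (hℓ : 2 ≤ ℓ) (hq : IsPrimitiveRoot (q ^ 2) ℓ)
    (m₁ n₁ m₂ n₂ : ℕ) (hm₂ : m₂ < ℓ) (hn₂ : n₂ < ℓ) :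
    Gb q (m₁ * ℓ + m₂) (n₁ * ℓ + n₂) = (m₁.choose n₁ : ℂ) * Gb q m₂ n₂ := by
  induction m₁ generalizing n₁ with
  | zero =>
    cases n₁ with
    | zero => simp
    | succ k =>
      rw [show (0 : ℕ) * ℓ + m₂ = m₂ by ring, Gb_eq_zero (show m₂ < (k+1) * ℓ + n₂ by nlinarith)]
      simp [Nat.choose_eq_zero_of_lt (show 0 < k + 1 by omega)]
  | succ m₁ ih =>
    rw [show (m₁ + 1) * ℓ + m₂ = (m₁ * ℓ + m₂) + ℓ by ring, Gb_add_ell hq0 hℓ hq]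
    cases n₁ with
    | zero =>
      rw [if_neg (show ¬ ℓ ≤ 0 * ℓ + n₂ by omega), ih 0]
      simp
    | succ k =>
      rw [if_pos (show ℓ ≤ (k + 1) * ℓ + n₂ by nlinarith),
        show (k + 1) * ℓ + n₂ - ℓ = k * ℓ + n₂ by rw [Nat.add_mul]; omega, ih (k + 1), ih k,
        Nat.choose_succ_succ]
      push_cast
      ring

/-- Lucas q-theorem: for `q²` a primitive `ℓ`-th root of unity and `m = m₁ℓ + m₂`,
`n = n₁ℓ + n₂` with `0 ≤ m₂, n₂ < ℓ`,
`[m choose n]_q = q^{ℓ(n₁ℓ(n₁-m₁) - m₂n₁ - m₁n₂)} C(m₁,n₁) [m₂ choose n₂]_q`;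
in particular `[m choose n]_q = 0` iff `m₁ < n₁` or `m₂ < n₂`. -/
theorem qLucas (q : ℂ) (ℓ : ℕ) (hq0 : q ≠ 0) (hℓ : 2 ≤ ℓ)
    (hq : IsPrimitiveRoot (q ^ 2) ℓ)
    (m₁ n₁ m₂ n₂ : ℕ) (hm₂ : m₂ < ℓ) (hn₂ : n₂ < ℓ) :
    gB q (m₁ * ℓ + m₂) (n₁ * ℓ + n₂) =
      q ^ ((ℓ : ℤ) * ((n₁ : ℤ) * ℓ * ((n₁ : ℤ) - m₁) - (m₂ : ℤ) * n₁ - (m₁ : ℤ) * n₂)) *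
        (m₁.choose n₁ : ℂ) * gB q m₂ n₂ ∧
    (gB q (m₁ * ℓ + m₂) (n₁ * ℓ + n₂) = 0 ↔ m₁ < n₁ ∨ m₂ < n₂) := by

  have hGl := Gb_lucas hq0 hℓ hq m₁ n₁ m₂ n₂ hm₂ hn₂
  have heq : gB q (m₁ * ℓ + m₂) (n₁ * ℓ + n₂) =
      q ^ ((ℓ : ℤ) * ((n₁ : ℤ) * ℓ * ((n₁ : ℤ) - m₁) - (m₂ : ℤ) * n₁ - (m₁ : ℤ) * n₂)) *
        (m₁.choose n₁ : ℂ) * gB q m₂ n₂ := by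
    rw [gB_eq_Gb hq0, gB_eq_Gb hq0, hGl]
    have hexp : -((n₁ * ℓ + n₂ : ℕ) : ℤ) * (((m₁ * ℓ + m₂ : ℕ) : ℤ) - ((n₁ * ℓ + n₂ : ℕ) : ℤ))
        = ((ℓ : ℤ) * ((n₁ : ℤ) * ℓ * ((n₁ : ℤ) - m₁) - (m₂ : ℤ) * n₁ - (m₁ : ℤ) * n₂)
            + -((n₂ : ℕ) : ℤ) * (((m₂ : ℕ) : ℤ) - ((n₂ : ℕ) : ℤ)))
          + ((2 * (ℓ * (n₁ * n₂)) : ℕ) : ℤ) := by push_cast; ring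
    rw [hexp, zpow_add₀ hq0, zpow_add₀ hq0, zpow_natCast, pow_mul, pow_mul,
      hq.pow_eq_one, one_pow, mul_one]
    ring
  refine ⟨heq, ?_⟩
  have hGiff : Gb q m₂ n₂ = 0 ↔ m₂ < n₂ := by
    constructor
    · intro h
      by_contra hc
      exact Gb_ne_zero hℓ hq (by omega) hm₂ hq0 h
    · exact fun h => Gb_eq_zero h
  have hgBiff : gB q m₂ n₂ = 0 ↔ m₂ < n₂ := by
    rw [gB_eq_Gb hq0, mul_eq_zero, ← hGiff]
    simp [zpow_ne_zero _ hq0]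
  rw [heq, mul_assoc, mul_eq_zero, mul_eq_zero]
  simp only [zpow_ne_zero _ hq0, false_or, hgBiff, Nat.cast_eq_zero, Nat.choose_eq_zero_iff]
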